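/- Let (X_i, Y_i), i = 1,…,n+Δ be i.i.d. pairs with joint distribution p on finite alphabets 𝒳 × 𝒴. Suppose B is a random variable taking values in a set of size at most 2^{(n+Δ)R} (the encoded bits), and X̃₁ⁿ is a random vector in 𝒳ⁿ such that X₁ⁿ is a deterministic function of (X̃₁ⁿ, B, Y₁^{n+Δ}) and B is a deterministic function of X₁^{n+Δ}. Then H(X̃₁ⁿ) ≥ n·H(X|Y) − (n+Δ)R, where H(X|Y) is the conditional entropy of X given Y under p. -/

import Mathlib

open scoped Classical

/-- Distribution of a random variable `f` on a finite probability space with pmf `P`. -/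
noncomputable def distOf {Ω α : Type*} [Fintype Ω] [Fintype α]
    (P : Ω → ℝ) (f : Ω → α) (a : α) : ℝ :=
  ∑ ω ∈ Finset.univ.filter (fun ω => f ω = a), P ω

/-- Shannon entropy (in bits) of a random variable `f` on a finite probability space. -/
noncomputable def entOf {Ω α : Type*} [Fintype Ω] [Fintype α]
    (P : Ω → ℝ) (f : Ω → α) : ℝ :=
  -∑ a, distOf P f a * Real.logb 2 (distOf P f a)

/-- Conditional Shannon entropy `H(X|Y)` (in bits) of a joint pmf on `𝒳 × 𝒴`. -/
noncomputable def condEnt {𝒳 𝒴 : Type*} [Fintype 𝒳] [Fintype 𝒴] (p : 𝒳 × 𝒴 → ℝ) : ℝ :=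
  -∑ z : 𝒳 × 𝒴, p z * Real.logb 2 (p z / ∑ x, p (x, z.2))

namespace FFE

noncomputable def ent {α : Type*} [Fintype α] (q : α → ℝ) : ℝ :=
  -∑ a, q a * Real.logb 2 (q a)

lemma entOf_eq {Ω α : Type*} [Fintype Ω] [Fintype α] (P : Ω → ℝ) (f : Ω → α) :
    entOf P f = ent (distOf P f) := rfl

variable {Ω α β γ : Type*} [Fintype Ω] [Fintype α] [Fintype β] [Fintype γ]

lemma distOf_nonneg (P : Ω → ℝ) (hP : ∀ ω, 0 ≤ P ω) (f : Ω → α) (a : α) :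
    0 ≤ distOf P f a :=
  Finset.sum_nonneg fun ω _ => hP ω

lemma sum_distOf (P : Ω → ℝ) (hPsum : ∑ ω, P ω = 1) (f : Ω → α) :
    ∑ a, distOf P f a = 1 := by
  unfold distOf
  rw [Finset.sum_fiberwise Finset.univ f P, hPsum]

lemma distOf_comp (P : Ω → ℝ) (f : Ω → α) (g : α → β) (b : β) :
    distOf P (fun ω => g (f ω)) b
      = ∑ a ∈ Finset.univ.filter (fun a => g a = b), distOf P f a := by
  unfold distOf
  rw [← Finset.sum_fiberwise_of_maps_to (g := f)
    (t := Finset.univ.filter (fun a => g a = b))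
    (fun ω hω => by
      simp only [Finset.mem_filter, Finset.mem_univ, true_and] at hω ⊢
      exact hω)]
  refine Finset.sum_congr rfl fun a ha => ?_
  simp only [Finset.mem_filter, Finset.mem_univ, true_and] at ha
  refine Finset.sum_congr ?_ fun _ _ => rfl
  ext ω
  simp only [Finset.mem_filter, Finset.mem_univ, true_and]
  constructor
  · rintro ⟨_, h2⟩; exact h2
  · intro h2; exact ⟨by rw [h2, ha], h2⟩

/-- Gibbs' inequality. -/
lemma gibbs (d q : α → ℝ) (hd0 : ∀ a, 0 ≤ d a) (hd1 : ∑ a, d a = 1)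
    (hq0 : ∀ a, 0 ≤ q a) (hq1 : ∑ a, q a ≤ 1)
    (hsupp : ∀ a, 0 < d a → 0 < q a) :
    ent d ≤ -∑ a, d a * Real.logb 2 (q a) := by
  have hlog2 : (0:ℝ) < Real.log 2 := Real.log_pos (by norm_num)
  have key : ∀ a, d a * Real.logb 2 (q a) - d a * Real.logb 2 (d a)
      ≤ (q a - d a) / Real.log 2 := by
    intro a
    rcases eq_or_lt_of_le (hd0 a) with h | h
    · rw [← h]
      simpa using div_nonneg (hq0 a) hlog2.le
    · have hq : 0 < q a := hsupp a h
      have h1 : Real.log (q a / d a) ≤ q a / d a - 1 :=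
        Real.log_le_sub_one_of_pos (by positivity)
      have h2 : Real.logb 2 (q a) - Real.logb 2 (d a)
          = Real.log (q a / d a) / Real.log 2 := by
        rw [Real.log_div (ne_of_gt hq) (ne_of_gt h)]
        simp [Real.logb, sub_div]
      have h3 : d a * (Real.logb 2 (q a) - Real.logb 2 (d a))
          ≤ d a * ((q a / d a - 1) / Real.log 2) := by
        rw [h2]
        gcongr
      calc d a * Real.logb 2 (q a) - d a * Real.logb 2 (d a)
          = d a * (Real.logb 2 (q a) - Real.logb 2 (d a)) := by ring
        _ ≤ d a * ((q a / d a - 1) / Real.log 2) := h3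
        _ = (q a - d a) / Real.log 2 := by
            field_simp
  have hsum : ∑ a, (d a * Real.logb 2 (q a) - d a * Real.logb 2 (d a))
      ≤ ∑ a, (q a - d a) / Real.log 2 :=
    Finset.sum_le_sum fun a _ => key a
  have : ∑ a, (q a - d a) / Real.log 2 = (∑ a, q a - 1) / Real.log 2 := by
    rw [← Finset.sum_div, Finset.sum_sub_distrib, hd1]
  rw [this] at hsum
  have hle : (∑ a, q a - 1) / Real.log 2 ≤ 0 :=
    div_nonpos_of_nonpos_of_nonneg (by linarith) hlog2.le
  rw [Finset.sum_sub_distrib] at hsum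
  unfold ent
  linarith

end FFE

namespace FFE

variable {Ω α β γ : Type*} [Fintype Ω] [Fintype α] [Fintype β] [Fintype γ]

lemma entOf_comp_le (P : Ω → ℝ) (hP : ∀ ω, 0 ≤ P ω) (f : Ω → α) (g : α → β) :
    entOf P (fun ω => g (f ω)) ≤ entOf P f := by
  set d := distOf P f with hd
  set q := distOf P (fun ω => g (f ω)) with hq
  have hd0 : ∀ a, 0 ≤ d a := distOf_nonneg P hP f
  have hdq : ∀ a, d a ≤ q (g a) := by
    intro a
    rw [hq, distOf_comp]
    exact Finset.single_le_sum (fun a' _ => hd0 a') (by simp)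
  have step1 : entOf P (fun ω => g (f ω)) = -∑ a, d a * Real.logb 2 (q (g a)) := by
    unfold entOf
    congr 1
    rw [← Finset.sum_fiberwise Finset.univ g (fun a => d a * Real.logb 2 (q (g a)))]
    refine Finset.sum_congr rfl fun b _ => ?_
    have : ∑ a ∈ Finset.univ.filter (fun a => g a = b), d a * Real.logb 2 (q (g a))
        = ∑ a ∈ Finset.univ.filter (fun a => g a = b), d a * Real.logb 2 (q b) := by
      refine Finset.sum_congr rfl fun a ha => ?_
      simp only [Finset.mem_filter, Finset.mem_univ, true_and] at ha
      rw [ha]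
    rw [this, ← Finset.sum_mul, ← distOf_comp]
  rw [step1]
  unfold entOf
  rw [neg_le_neg_iff]
  refine Finset.sum_le_sum fun a _ => ?_
  rcases eq_or_lt_of_le (hd0 a) with h | h
  · have h0 : distOf P f a = 0 := h.symm
    have h1 : d a = 0 := h.symm
    rw [h0, h1]; simp
  · have hqpos : 0 < q (g a) := lt_of_lt_of_le h (hdq a)
    exact mul_le_mul_of_nonneg_left
      (Real.logb_le_logb_of_le (by norm_num) h (hdq a)) (hd0 a)

lemma distOf_pair_fst (P : Ω → ℝ) (f : Ω → α) (g : Ω → β) (a : α) :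
    ∑ b, distOf P (fun ω => (f ω, g ω)) (a, b) = distOf P f a := by
  have h : distOf P f a
      = ∑ z ∈ Finset.univ.filter (fun z : α × β => z.1 = a),
          distOf P (fun ω => (f ω, g ω)) z := by
    simpa using distOf_comp P (fun ω => (f ω, g ω)) Prod.fst a
  rw [h, Finset.sum_filter, Fintype.sum_prod_type]
  symm
  rw [Finset.sum_eq_single a (fun x _ hx => by simp [hx]) (by simp)]
  simp

lemma distOf_pair_snd (P : Ω → ℝ) (f : Ω → α) (g : Ω → β) (b : β) :
    ∑ a, distOf P (fun ω => (f ω, g ω)) (a, b) = distOf P g b := by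
  have h : distOf P g b
      = ∑ z ∈ Finset.univ.filter (fun z : α × β => z.2 = b),
          distOf P (fun ω => (f ω, g ω)) z := by
    simpa using distOf_comp P (fun ω => (f ω, g ω)) Prod.snd b
  rw [h, Finset.sum_filter, Fintype.sum_prod_type_right]
  symm
  rw [Finset.sum_eq_single b (fun x _ hx => by simp [hx]) (by simp)]
  simp

end FFE

namespace FFE

variable {Ω α β γ : Type*} [Fintype Ω] [Fintype α] [Fintype β] [Fintype γ]

lemma entOf_pair_le (P : Ω → ℝ) (hP : ∀ ω, 0 ≤ P ω) (hPsum : ∑ ω, P ω = 1)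
    (f : Ω → α) (g : Ω → β) :
    entOf P (fun ω => (f ω, g ω)) ≤ entOf P f + entOf P g := by
  set D := distOf P (fun ω => (f ω, g ω)) with hD
  set dF := distOf P f with hdF
  set dG := distOf P g with hdG
  have hD0 : ∀ z, 0 ≤ D z := distOf_nonneg P hP _
  have hF0 : ∀ a, 0 ≤ dF a := distOf_nonneg P hP _
  have hG0 : ∀ b, 0 ≤ dG b := distOf_nonneg P hP _
  have hDF : ∀ a b, D (a, b) ≤ dF a := by
    intro a b
    rw [hdF, ← distOf_pair_fst P f g a]
    exact Finset.single_le_sum (fun b' _ => hD0 (a, b')) (Finset.mem_univ b)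
  have hDG : ∀ a b, D (a, b) ≤ dG b := by
    intro a b
    rw [hdG, ← distOf_pair_snd P f g b]
    exact Finset.single_le_sum (fun a' _ => hD0 (a', b)) (Finset.mem_univ a)
  have hgibbs := gibbs D (fun z => dF z.1 * dG z.2) hD0
    (sum_distOf P hPsum _)
    (fun z => mul_nonneg (hF0 z.1) (hG0 z.2))
    (by
      rw [Fintype.sum_prod_type]
      simp only [← Finset.mul_sum, ← Finset.sum_mul]
      rw [sum_distOf P hPsum f, sum_distOf P hPsum g]
      norm_num)
    (fun z hz => mul_pos (lt_of_lt_of_le hz (hDF z.1 z.2))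
      (lt_of_lt_of_le hz (hDG z.1 z.2)))
  rw [entOf_eq]
  refine le_trans hgibbs ?_
  have split : ∀ z : α × β, D z * Real.logb 2 (dF z.1 * dG z.2)
      = D z * Real.logb 2 (dF z.1) + D z * Real.logb 2 (dG z.2) := by
    rintro ⟨a, b⟩
    rcases eq_or_lt_of_le (hD0 (a, b)) with h | h
    · rw [← h]; simp
    · have h1 : dF a ≠ 0 := ne_of_gt (lt_of_lt_of_le h (hDF a b))
      have h2 : dG b ≠ 0 := ne_of_gt (lt_of_lt_of_le h (hDG a b))
      rw [Real.logb_mul h1 h2]; ring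
  have e1 : ∑ z : α × β, D z * Real.logb 2 (dF z.1)
      = ∑ a, dF a * Real.logb 2 (dF a) := by
    rw [Fintype.sum_prod_type]
    refine Finset.sum_congr rfl fun a _ => ?_
    dsimp only
    rw [← Finset.sum_mul, distOf_pair_fst P f g a]
  have e2 : ∑ z : α × β, D z * Real.logb 2 (dG z.2)
      = ∑ b, dG b * Real.logb 2 (dG b) := by
    rw [Fintype.sum_prod_type_right]
    refine Finset.sum_congr rfl fun b _ => ?_
    dsimp only
    rw [← Finset.sum_mul, distOf_pair_snd P f g b]
  calc -∑ z : α × β, D z * Real.logb 2 (dF z.1 * dG z.2)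
      = -(∑ z : α × β, D z * Real.logb 2 (dF z.1)
          + ∑ z : α × β, D z * Real.logb 2 (dG z.2)) := by
        rw [← Finset.sum_add_distrib]
        congr 1
        exact Finset.sum_congr rfl fun z _ => split z
    _ = entOf P f + entOf P g := by
        rw [e1, e2]; unfold entOf; ring
    _ ≤ entOf P f + entOf P g := le_rfl

lemma entOf_le_logb_card (P : Ω → ℝ) (hP : ∀ ω, 0 ≤ P ω) (hPsum : ∑ ω, P ω = 1)
    [Nonempty α] (f : Ω → α) :
    entOf P f ≤ Real.logb 2 (Fintype.card α) := by
  have hcard : (0:ℝ) < Fintype.card α := by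
    exact_mod_cast Fintype.card_pos
  have hgibbs := gibbs (distOf P f) (fun _ => (Fintype.card α : ℝ)⁻¹)
    (distOf_nonneg P hP f) (sum_distOf P hPsum f)
    (fun _ => by positivity)
    (by rw [Finset.sum_const, Finset.card_univ, nsmul_eq_mul]
        rw [mul_inv_cancel₀ (ne_of_gt hcard)])
    (fun _ _ => by positivity)
  rw [entOf_eq] at *
  refine le_trans hgibbs ?_
  rw [← Finset.sum_mul, sum_distOf P hPsum f, one_mul, Real.logb_inv]
  simp

end FFE

namespace FFE

variable {α β γ : Type*} [Fintype α] [Fintype β] [Fintype γ]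

lemma ent_comp_equiv (e : β ≃ α) (q : α → ℝ) : ent (fun b => q (e b)) = ent q := by
  unfold ent
  congr 1
  exact e.sum_comp (fun a => q a * Real.logb 2 (q a))

lemma ent_pair_prod (q1 : α → ℝ) (q2 : β → ℝ)
    (h10 : ∀ a, 0 ≤ q1 a) (h11 : ∑ a, q1 a = 1)
    (h20 : ∀ b, 0 ≤ q2 b) (h21 : ∑ b, q2 b = 1) :
    ent (fun z : α × β => q1 z.1 * q2 z.2) = ent q1 + ent q2 := by
  unfold ent
  have split : ∀ z : α × β, q1 z.1 * q2 z.2 * Real.logb 2 (q1 z.1 * q2 z.2)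
      = q1 z.1 * q2 z.2 * Real.logb 2 (q1 z.1)
        + q1 z.1 * q2 z.2 * Real.logb 2 (q2 z.2) := by
    rintro ⟨a, b⟩
    dsimp only
    rcases eq_or_ne (q1 a) 0 with h | h
    · rw [h]; ring
    · rcases eq_or_ne (q2 b) 0 with h' | h'
      · rw [h']; ring
      · rw [Real.logb_mul h h']; ring
  rw [Finset.sum_congr rfl fun z _ => split z, Finset.sum_add_distrib]
  have e1 : ∑ z : α × β, q1 z.1 * q2 z.2 * Real.logb 2 (q1 z.1)
      = ∑ a, q1 a * Real.logb 2 (q1 a) := by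
    rw [Fintype.sum_prod_type]
    refine Finset.sum_congr rfl fun a _ => ?_
    dsimp only
    rw [Finset.sum_congr rfl (fun b _ => by ring :
      ∀ b ∈ Finset.univ, q1 a * q2 b * Real.logb 2 (q1 a)
        = q2 b * (q1 a * Real.logb 2 (q1 a))), ← Finset.sum_mul, h21, one_mul]
  have e2 : ∑ z : α × β, q1 z.1 * q2 z.2 * Real.logb 2 (q2 z.2)
      = ∑ b, q2 b * Real.logb 2 (q2 b) := by
    rw [Fintype.sum_prod_type_right]
    refine Finset.sum_congr rfl fun b _ => ?_
    dsimp only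
    rw [Finset.sum_congr rfl (fun a _ => by ring :
      ∀ a ∈ Finset.univ, q1 a * q2 b * Real.logb 2 (q2 b)
        = q1 a * (q2 b * Real.logb 2 (q2 b))), ← Finset.sum_mul, h11, one_mul]
  rw [e1, e2]
  ring

lemma sum_prod_pmf (m : ℕ) (q : α → ℝ) (h1 : ∑ a, q a = 1) :
    ∑ f : Fin m → α, ∏ i, q (f i) = 1 := by
  classical
  rw [← Fintype.piFinset_univ,
    ← Finset.prod_univ_sum (fun _ : Fin m => (Finset.univ : Finset α)) (fun _ a => q a)]
  simp [h1]

lemma ent_prod (m : ℕ) (q : α → ℝ) (h0 : ∀ a, 0 ≤ q a) (h1 : ∑ a, q a = 1) :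
    ent (fun f : Fin m → α => ∏ i, q (f i)) = m * ent q := by
  induction m with
  | zero => simp [ent]
  | succ k ih =>
    have heq : ent (fun f : Fin (k+1) → α => ∏ i, q (f i))
        = ent (fun z : α × (Fin k → α) => q z.1 * ∏ i, q (z.2 i)) := by
      rw [← ent_comp_equiv (Fin.consEquiv (fun _ : Fin (k+1) => α))
        (fun f : Fin (k+1) → α => ∏ i, q (f i))]
      congr 1
      funext z
      obtain ⟨a, g⟩ := z
      simp [Fin.consEquiv, Fin.prod_univ_succ]
    rw [heq, ent_pair_prod q (fun g : Fin k → α => ∏ i, q (g i)) h0 h1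
      (fun g => Finset.prod_nonneg fun i _ => h0 (g i)) (sum_prod_pmf k q h1), ih]
    push_cast
    ring

end FFE

namespace FFE

variable {𝒳 𝒴 : Type*} [Fintype 𝒳] [Fintype 𝒴]

lemma condEnt_eq (p : 𝒳 × 𝒴 → ℝ) (hp : ∀ z, 0 ≤ p z) :
    condEnt p = ent p - ent (fun y => ∑ x, p (x, y)) := by
  set pY : 𝒴 → ℝ := fun y => ∑ x, p (x, y) with hpY
  have split : ∀ z : 𝒳 × 𝒴, p z * Real.logb 2 (p z / pY z.2)
      = p z * Real.logb 2 (p z) - p z * Real.logb 2 (pY z.2) := by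
    rintro ⟨x, y⟩
    rcases eq_or_lt_of_le (hp (x, y)) with h | h
    · rw [← h]; ring
    · have h1 : p (x, y) ≤ pY y :=
        Finset.single_le_sum (fun x' _ => hp (x', y)) (Finset.mem_univ x)
      have h2 : (0:ℝ) < pY y := lt_of_lt_of_le h h1
      rw [Real.logb_div (ne_of_gt h) (ne_of_gt h2)]
      ring
  unfold condEnt ent
  rw [Finset.sum_congr rfl fun z _ => split z, Finset.sum_sub_distrib]
  have e2 : ∑ z : 𝒳 × 𝒴, p z * Real.logb 2 (pY z.2)
      = ∑ y, pY y * Real.logb 2 (pY y) := by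
    rw [Fintype.sum_prod_type_right]
    refine Finset.sum_congr rfl fun y _ => ?_
    dsimp only
    rw [← Finset.sum_mul]
  rw [e2]
  ring

lemma sum_fiber_snd {ι : Type*} [Fintype ι] (p : 𝒳 × 𝒴 → ℝ) (b : ι → 𝒴) :
    ∑ f ∈ Finset.univ.filter (fun f : ι → 𝒳 × 𝒴 => (fun i => (f i).2) = b), ∏ i, p (f i)
      = ∏ i, ∑ x, p (x, b i) := by
  classical
  rw [show (∏ i, ∑ x, p (x, b i)) = ∑ x ∈ Fintype.piFinset (fun _ : ι => (Finset.univ : Finset 𝒳)), ∏ i, p (x i, b i) from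
    Finset.prod_univ_sum _ _]
  rw [Fintype.piFinset_univ]
  refine Finset.sum_nbij' (fun f => fun i => (f i).1) (fun x => fun i => (x i, b i))
    (fun f _ => Finset.mem_univ _) ?_ ?_ ?_ ?_
  · intro x _
    simp only [Finset.mem_filter, Finset.mem_univ, true_and]
  · intro f hf
    simp only [Finset.mem_filter, Finset.mem_univ, true_and] at hf
    funext i
    show ((f i).1, b i) = f i
    exact Prod.ext rfl (congrFun hf i).symm
  · intro x _
    rfl
  · intro f hf
    simp only [Finset.mem_filter, Finset.mem_univ, true_and] at hf
    refine Finset.prod_congr rfl fun i _ => ?_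
    congr 1
    show f i = ((f i).1, b i)
    exact Prod.ext rfl (congrFun hf i)

lemma sum_fiber_split (n Δ : ℕ) (p : 𝒳 × 𝒴 → ℝ) (u : Fin n → 𝒳 × 𝒴) (v : Fin Δ → 𝒴) :
    ∑ f ∈ Finset.univ.filter (fun f : Fin (n+Δ) → 𝒳 × 𝒴 =>
        ((fun i => f (Fin.castAdd Δ i), fun j => (f (Fin.natAdd n j)).2)
          : (Fin n → 𝒳 × 𝒴) × (Fin Δ → 𝒴)) = (u, v)), ∏ i, p (f i)
      = (∏ i, p (u i)) * ∏ j, ∑ x, p (x, v j) := by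
  classical
  have hrhs : (∏ j : Fin Δ, ∑ x, p (x, v j)) = ∑ x : Fin Δ → 𝒳, ∏ j, p (x j, v j) := by
    rw [show (∑ x : Fin Δ → 𝒳, ∏ j, p (x j, v j))
        = ∑ x ∈ Fintype.piFinset (fun _ : Fin Δ => (Finset.univ : Finset 𝒳)), ∏ j, p (x j, v j) by
      rw [Fintype.piFinset_univ]]
    exact Finset.prod_univ_sum _ _
  rw [hrhs, Finset.mul_sum]
  refine Finset.sum_nbij' (fun f => fun j => (f (Fin.natAdd n j)).1)
    (fun x => Fin.addCases u (fun j => (x j, v j)))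
    (fun f _ => Finset.mem_univ _) ?_ ?_ ?_ ?_
  · intro x _
    simp only [Finset.mem_filter, Finset.mem_univ, true_and]
    refine Prod.ext ?_ ?_
    · funext i
      simp [Fin.addCases_left]
    · funext j
      simp [Fin.addCases_right]
  · intro f hf
    simp only [Finset.mem_filter, Finset.mem_univ, true_and] at hf
    have h1 : ∀ i, f (Fin.castAdd Δ i) = u i := fun i =>
      congrFun (congrArg Prod.fst hf) i
    have h2 : ∀ j, (f (Fin.natAdd n j)).2 = v j := fun j =>
      congrFun (congrArg Prod.snd hf) j
    funext k
    show Fin.addCases u (fun j => ((f (Fin.natAdd n j)).1, v j)) k = f k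
    induction k using Fin.addCases with
    | left i => rw [Fin.addCases_left]; exact (h1 i).symm
    | right j => rw [Fin.addCases_right]; exact Prod.ext rfl (h2 j).symm
  · intro x _
    funext j
    simp [Fin.addCases_right]
  · intro f hf
    simp only [Finset.mem_filter, Finset.mem_univ, true_and] at hf
    have h1 : ∀ i, f (Fin.castAdd Δ i) = u i := fun i =>
      congrFun (congrArg Prod.fst hf) i
    have h2 : ∀ j, (f (Fin.natAdd n j)).2 = v j := fun j =>
      congrFun (congrArg Prod.snd hf) j
    show (∏ k : Fin (n+Δ), p (f k))
        = (∏ i, p (u i)) * ∏ j, p ((f (Fin.natAdd n j)).1, v j)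
    rw [Fin.prod_univ_add]
    congr 1
    · exact Finset.prod_congr rfl fun i _ => by rw [h1 i]
    · refine Finset.prod_congr rfl fun j _ => ?_
      congr 1
      exact Prod.ext rfl (h2 j)

end FFE

set_option maxHeartbeats 2000000 in
open FFE in
theorem feedforward_error_entropy_bound
    {Ω 𝒳 𝒴 β : Type*} [Fintype Ω] [Fintype 𝒳] [Fintype 𝒴] [Fintype β]
    (n Δ : ℕ) (R : ℝ) (hR : 0 < R)
    (P : Ω → ℝ) (hP : ∀ ω, 0 ≤ P ω) (hPsum : ∑ ω, P ω = 1)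
    (p : 𝒳 × 𝒴 → ℝ) (hp : ∀ z, 0 ≤ p z) (hpsum : ∑ z, p z = 1)
    (X : Fin (n + Δ) → Ω → 𝒳) (Y : Fin (n + Δ) → Ω → 𝒴)
    (hiid : ∀ f : Fin (n + Δ) → 𝒳 × 𝒴,
      distOf P (fun ω i => (X i ω, Y i ω)) f = ∏ i, p (f i))
    (B : Ω → β)
    (hcard : (Fintype.card β : ℝ) ≤ 2 ^ (((n : ℝ) + (Δ : ℝ)) * R))
    (henc : ∃ e : (Fin (n + Δ) → 𝒳) → β, ∀ ω, B ω = e (fun i => X i ω))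
    (Xt : Ω → Fin n → 𝒳)
    (hdec : ∃ g : (Fin n → 𝒳) × β × (Fin (n + Δ) → 𝒴) → Fin n → 𝒳,
      ∀ ω, (fun i : Fin n => X (Fin.castAdd Δ i) ω)
        = g (Xt ω, B ω, fun i => Y i ω)) :
    entOf P Xt ≥ (n : ℝ) * condEnt p - ((n : ℝ) + (Δ : ℝ)) * R := by
  classical
  obtain ⟨g, hg⟩ := hdec
  set pY : 𝒴 → ℝ := fun y => ∑ x, p (x, y) with hpYdef
  have hpY0 : ∀ y, 0 ≤ pY y := fun y => Finset.sum_nonneg fun x _ => hp (x, y)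
  have hpY1 : ∑ y, pY y = 1 := by
    rw [hpYdef, ← Fintype.sum_prod_type_right]; exact hpsum
  have hΩ : Nonempty Ω := by
    by_contra h
    rw [not_nonempty_iff] at h
    rw [Finset.univ_eq_empty, Finset.sum_empty] at hPsum
    norm_num at hPsum
  have hβ : Nonempty β := ⟨B (Classical.arbitrary Ω)⟩
  -- distribution of the Y-vector
  have hYv : distOf P (fun ω (i : Fin (n+Δ)) => Y i ω)
      = fun b : Fin (n+Δ) → 𝒴 => ∏ i, pY (b i) := by
    funext b
    have h := distOf_comp P (fun ω (i : Fin (n+Δ)) => (X i ω, Y i ω))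
      (fun f (i : Fin (n+Δ)) => (f i).2) b
    rw [show (fun ω => (fun f (i : Fin (n+Δ)) => (f i).2)
        ((fun ω (i : Fin (n+Δ)) => (X i ω, Y i ω)) ω))
        = (fun ω (i : Fin (n+Δ)) => Y i ω) from rfl] at h
    rw [h, Finset.sum_congr rfl fun f _ => hiid f]
    convert sum_fiber_snd p b using 2
    ext f
    simp
  have hentYv : entOf P (fun ω (i : Fin (n+Δ)) => Y i ω)
      = ((n:ℝ)+(Δ:ℝ)) * ent pY := by
    rw [entOf_eq, hYv, ent_prod (n+Δ) pY hpY0 hpY1]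
    push_cast
    ring
  -- distribution of U = (pairs on the first n coords, Y-tail)
  have hU : distOf P (fun ω => ((fun i : Fin n => (X (Fin.castAdd Δ i) ω, Y (Fin.castAdd Δ i) ω)),
        fun j : Fin Δ => Y (Fin.natAdd n j) ω))
      = fun z : (Fin n → 𝒳 × 𝒴) × (Fin Δ → 𝒴) => (∏ i, p (z.1 i)) * ∏ j, pY (z.2 j) := by
    funext z
    obtain ⟨u, v⟩ := z
    have h := distOf_comp P (fun ω (i : Fin (n+Δ)) => (X i ω, Y i ω))
      (fun f : Fin (n+Δ) → 𝒳 × 𝒴 =>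
        (((fun i : Fin n => f (Fin.castAdd Δ i)), fun j : Fin Δ => (f (Fin.natAdd n j)).2)
          : (Fin n → 𝒳 × 𝒴) × (Fin Δ → 𝒴))) (u, v)
    rw [show (fun ω => (fun f : Fin (n+Δ) → 𝒳 × 𝒴 =>
        (((fun i : Fin n => f (Fin.castAdd Δ i)), fun j : Fin Δ => (f (Fin.natAdd n j)).2)
          : (Fin n → 𝒳 × 𝒴) × (Fin Δ → 𝒴))) ((fun ω (i : Fin (n+Δ)) => (X i ω, Y i ω)) ω))
        = (fun ω => ((fun i : Fin n => (X (Fin.castAdd Δ i) ω, Y (Fin.castAdd Δ i) ω)),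
          fun j : Fin Δ => Y (Fin.natAdd n j) ω)) from rfl] at h
    rw [h, Finset.sum_congr rfl fun f _ => hiid f]
    convert sum_fiber_split n Δ p u v using 2
    ext f
    simp
  have hentU : entOf P (fun ω => ((fun i : Fin n => (X (Fin.castAdd Δ i) ω, Y (Fin.castAdd Δ i) ω)),
        fun j : Fin Δ => Y (Fin.natAdd n j) ω))
      = (n:ℝ) * ent p + (Δ:ℝ) * ent pY := by
    rw [entOf_eq, hU]
    rw [show (fun z : (Fin n → 𝒳 × 𝒴) × (Fin Δ → 𝒴) => (∏ i, p (z.1 i)) * ∏ j, pY (z.2 j))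
        = (fun z : (Fin n → 𝒳 × 𝒴) × (Fin Δ → 𝒴) =>
            (fun u : Fin n → 𝒳 × 𝒴 => ∏ i, p (u i)) z.1
              * (fun v : Fin Δ → 𝒴 => ∏ j, pY (v j)) z.2) from rfl]
    rw [ent_pair_prod _ _ (fun u => Finset.prod_nonneg fun i _ => hp _)
      (sum_prod_pmf n p hpsum) (fun v => Finset.prod_nonneg fun j _ => hpY0 _)
      (sum_prod_pmf Δ pY hpY1)]
    rw [ent_prod n p hp hpsum, ent_prod Δ pY hpY0 hpY1]
  -- U is a function of (Xt, B, Yvec)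
  have hUk : (fun ω => ((fun i : Fin n => (X (Fin.castAdd Δ i) ω, Y (Fin.castAdd Δ i) ω)),
        fun j : Fin Δ => Y (Fin.natAdd n j) ω))
      = fun ω => (fun w : (Fin n → 𝒳) × β × (Fin (n+Δ) → 𝒴) =>
          (((fun i : Fin n => (g w i, w.2.2 (Fin.castAdd Δ i))),
            fun j : Fin Δ => w.2.2 (Fin.natAdd n j))
            : (Fin n → 𝒳 × 𝒴) × (Fin Δ → 𝒴)))
        ((fun ω => (Xt ω, B ω, fun i : Fin (n+Δ) => Y i ω)) ω) := by
    funext ω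
    refine Prod.ext ?_ rfl
    funext i
    exact Prod.ext (congrFun (hg ω) i) rfl
  have h1 : entOf P (fun ω => ((fun i : Fin n => (X (Fin.castAdd Δ i) ω, Y (Fin.castAdd Δ i) ω)),
        fun j : Fin Δ => Y (Fin.natAdd n j) ω))
      ≤ entOf P (fun ω => (Xt ω, (B ω, fun i : Fin (n+Δ) => Y i ω))) := by
    rw [hUk]
    exact entOf_comp_le P hP (fun ω => (Xt ω, B ω, fun i : Fin (n+Δ) => Y i ω))
      (fun w : (Fin n → 𝒳) × β × (Fin (n+Δ) → 𝒴) =>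
        (((fun i : Fin n => (g w i, w.2.2 (Fin.castAdd Δ i))),
          fun j : Fin Δ => w.2.2 (Fin.natAdd n j))
          : (Fin n → 𝒳 × 𝒴) × (Fin Δ → 𝒴)))
  have h2 : entOf P (fun ω => (Xt ω, (B ω, fun i : Fin (n+Δ) => Y i ω)))
      ≤ entOf P Xt + entOf P (fun ω => (B ω, fun i : Fin (n+Δ) => Y i ω)) :=
    entOf_pair_le P hP hPsum Xt (fun ω => (B ω, fun i : Fin (n+Δ) => Y i ω))
  have h3 : entOf P (fun ω => (B ω, fun i : Fin (n+Δ) => Y i ω))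
      ≤ entOf P B + entOf P (fun ω (i : Fin (n+Δ)) => Y i ω) :=
    entOf_pair_le P hP hPsum B (fun ω (i : Fin (n+Δ)) => Y i ω)
  have hB : entOf P B ≤ ((n:ℝ)+(Δ:ℝ)) * R := by
    refine le_trans (entOf_le_logb_card P hP hPsum B) ?_
    have hcpos : (0:ℝ) < Fintype.card β := by exact_mod_cast Fintype.card_pos
    calc Real.logb 2 (Fintype.card β)
        ≤ Real.logb 2 (2 ^ (((n:ℝ)+(Δ:ℝ)) * R)) :=
          Real.logb_le_logb_of_le (by norm_num) hcpos hcard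
      _ = ((n:ℝ)+(Δ:ℝ)) * R := Real.logb_rpow (by norm_num) (by norm_num)
  have hcond : condEnt p = ent p - ent pY := condEnt_eq p hp
  have hncond : (n:ℝ) * condEnt p = (n:ℝ) * ent p - (n:ℝ) * ent pY := by
    rw [hcond]; ring
  linarith [h1, h2, h3, hB, hentU, hentYv, hncond]
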